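/- Let n ≥ 3 and let C be an irreducible relative interaction matrix that does not have star topology (there is no index i such that C_{ji} = 1 for all j ≠ i), and let c be the dominant left eigenvector of C. Then there exists a unique point x* in the interior of Δⁿ (all entries strictly positive) with F(x*) = x*; the set of fixed points of F in Δⁿ is exactly {e_1, …, e_n, x*}; and the ordering of the entries of x* equals the ordering of the entries of c, i.e., for all i, j: x*_i > x*_j if and only if c_i > c_j, and x*_i = x*_j if and only if c_i = c_j. -/

import Mathlib

/-- The simplex Δⁿ = {x ∈ ℝⁿ : xᵢ ≥ 0, ∑ᵢ xᵢ = 1}. -/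
def simplex (n : ℕ) : Set (Fin n → ℝ) :=
  {x | (∀ i, 0 ≤ x i) ∧ ∑ i, x i = 1}

/-- The i-th vertex (standard basis vector) of the simplex. -/
def vertex (n : ℕ) (i : Fin n) : Fin n → ℝ := fun j => if j = i then 1 else 0

/-- A relative interaction matrix: nonnegative, row-stochastic, zero diagonal. -/
def IsRIM {n : ℕ} (C : Matrix (Fin n) (Fin n) ℝ) : Prop :=
  (∀ i j, 0 ≤ C i j) ∧ (∀ i, ∑ j, C i j = 1) ∧ (∀ i, C i i = 0)

/-- The single-timescale DeGroot–Friedkin map F(x) = Cᵀ(x − x²) + x². -/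
noncomputable def DF {n : ℕ} (C : Matrix (Fin n) (Fin n) ℝ) (x : Fin n → ℝ) : Fin n → ℝ :=
  fun i => ∑ j, C j i * (x j - (x j) ^ 2) + (x i) ^ 2

/-- A nonnegative matrix is irreducible if for all i ≠ j some power has positive (i,j) entry. -/
def Irred {n : ℕ} (C : Matrix (Fin n) (Fin n) ℝ) : Prop :=
  ∀ i j : Fin n, i ≠ j → ∃ k, 1 ≤ k ∧ 0 < (C ^ k) i j

/-- C has star topology: some node i receives weight 1 from every other node. -/
def HasStarTopology {n : ℕ} (C : Matrix (Fin n) (Fin n) ℝ) : Prop :=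
  ∃ i : Fin n, ∀ j, j ≠ i → C j i = 1

/-- c is the dominant left eigenvector of C: c ∈ Δⁿ and cᵀ C = cᵀ. -/
def DominantLeftEigenvector {n : ℕ} (C : Matrix (Fin n) (Fin n) ℝ) (c : Fin n → ℝ) : Prop :=
  c ∈ simplex n ∧ ∀ j, ∑ i, c i * C i j = c j


lemma quad_mono {a b : ℝ} (hab : a < b) (h1 : a + b < 1) : a*(1-a) < b*(1-b) := by nlinarith

lemma pow_entry_nonneg {n : ℕ} {C : Matrix (Fin n) (Fin n) ℝ} (hC : ∀ i j, 0 ≤ C i j) :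
    ∀ k i j, 0 ≤ (C^k) i j := by
  intro k
  induction k with
  | zero => intro i j; simp [Matrix.one_apply]; split <;> norm_num
  | succ m ih =>
    intro i j
    rw [pow_succ, Matrix.mul_apply]
    exact Finset.sum_nonneg fun l _ => mul_nonneg (ih i l) (hC l j)

lemma stationary_pow {n : ℕ} {C : Matrix (Fin n) (Fin n) ℝ} {v : Fin n → ℝ}
    (hv : ∀ j, ∑ i, v i * C i j = v j) : ∀ k j, ∑ i, v i * (C^k) i j = v j := by
  intro k
  induction k with
  | zero => intro j; simp [Matrix.one_apply]
  | succ m ih =>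
    intro j
    rw [pow_succ]
    calc ∑ i, v i * (C^m * C) i j = ∑ i, ∑ l, v i * ((C^m) i l * C l j) := by
          simp [Matrix.mul_apply, Finset.mul_sum]
      _ = ∑ l, (∑ i, v i * (C^m) i l) * C l j := by
          rw [Finset.sum_comm]; simp [Finset.sum_mul, mul_assoc]
      _ = ∑ l, v l * C l j := by simp only [ih]
      _ = v j := hv j

lemma c_pos {n : ℕ} {C : Matrix (Fin n) (Fin n) ℝ} {c : Fin n → ℝ} (hC : IsRIM C)
    (hirr : Irred C) (hc : DominantLeftEigenvector C c) : ∀ i, 0 < c i := by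
  obtain ⟨⟨hcnn, hcsum⟩, hcst⟩ := hc
  -- some coordinate positive
  have hex : ∃ i, 0 < c i := by
    by_contra h
    push_neg at h
    have : ∑ i, c i ≤ 0 := Finset.sum_nonpos (fun i _ => h i)
    rw [hcsum] at this; linarith
  obtain ⟨i0, hi0⟩ := hex
  intro j
  rcases lt_or_eq_of_le (hcnn j) with h | h
  · exact h
  · exfalso
    have hij : i0 ≠ j := by rintro rfl; rw [← h] at hi0; exact lt_irrefl _ hi0
    obtain ⟨k, _, hk⟩ := hirr i0 j hij
    have hst := stationary_pow hcst k j
    have : c i0 * (C^k) i0 j ≤ ∑ i, c i * (C^k) i j := by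
      apply Finset.single_le_sum (f := fun i => c i * (C^k) i j)
      · exact fun i _ => mul_nonneg (hcnn i) (pow_entry_nonneg hC.1 k i j)
      · exact Finset.mem_univ i0
    rw [hst, ← h] at this
    nlinarith [mul_pos hi0 hk]

lemma c_lt_half {n : ℕ} {C : Matrix (Fin n) (Fin n) ℝ} {c : Fin n → ℝ} (hC : IsRIM C)
    (hirr : Irred C) (hnostar : ¬ HasStarTopology C) (hc : DominantLeftEigenvector C c) :
    ∀ i, c i < 1/2 := by
  obtain ⟨hnn, hrow, hdiag⟩ := hC
  have hpos := c_pos ⟨hnn, hrow, hdiag⟩ hirr hc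
  obtain ⟨⟨hcnn, hcsum⟩, hcst⟩ := hc
  intro i
  by_contra h
  push_neg at h
  -- c i = ∑_{j≠i} c j * C j i ≤ ∑_{j≠i} c j = 1 - c i ≤ 1/2 ≤ c i, all equalities
  have hCle : ∀ j, C j i ≤ 1 := by
    intro j
    have := hrow j
    have h1 : C j i ≤ ∑ l, C j l :=
      Finset.single_le_sum (fun l _ => hnn j l) (Finset.mem_univ i)
    linarith
  have hsum1 : ∑ j ∈ Finset.univ.erase i, c j * C j i = c i := by
    rw [← hcst i]
    rw [← Finset.sum_erase_add _ _ (Finset.mem_univ i)]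
    rw [hdiag i]; ring
  have hsum2 : ∑ j ∈ Finset.univ.erase i, c j = 1 - c i := by
    have := Finset.sum_erase_add Finset.univ c (Finset.mem_univ i)
    rw [hcsum] at this; linarith
  have hle : ∑ j ∈ Finset.univ.erase i, c j * C j i ≤ ∑ j ∈ Finset.univ.erase i, c j := by
    apply Finset.sum_le_sum
    intro j _
    nlinarith [hpos j, hCle j, hnn j i]
  -- so c i ≤ 1 - c i, i.e. c i ≤ 1/2, so c i = 1/2 and equality throughout
  have hci : c i = 1/2 := by rw [hsum1, hsum2] at hle; linarith
  have heq : ∑ j ∈ Finset.univ.erase i, c j * C j i = ∑ j ∈ Finset.univ.erase i, c j := by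
    rw [hsum1, hsum2, hci]; norm_num
  have hall : ∀ j ∈ Finset.univ.erase i, c j * C j i = c j := by
    intro j hj
    by_contra hne
    have hlt : c j * C j i < c j := by
      rcases lt_or_eq_of_le (hCle j) with h1 | h1
      · nlinarith [hpos j]
      · exfalso; exact hne (by rw [h1, mul_one])
    have : ∑ j ∈ Finset.univ.erase i, c j * C j i < ∑ j ∈ Finset.univ.erase i, c j := by
      apply Finset.sum_lt_sum (fun l _ => by nlinarith [hpos l, hCle l, hnn l i])
      exact ⟨j, hj, hlt⟩
    linarith [heq]
  apply hnostar
  refine ⟨i, fun j hj => ?_⟩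
  have h0 := hall j (Finset.mem_erase.mpr ⟨hj, Finset.mem_univ j⟩)
  have hcj := hpos j
  have h2 : c j * (C j i - 1) = 0 := by nlinarith [h0]
  rcases mul_eq_zero.mp h2 with h3 | h3
  · exact absurd h3 (ne_of_gt hcj)
  · linarith

lemma stationary_unique {n : ℕ} {C : Matrix (Fin n) (Fin n) ℝ} {c w : Fin n → ℝ} (hC : IsRIM C)
    (hirr : Irred C) (hc : DominantLeftEigenvector C c)
    (hn : 0 < n) (hw : w ∈ simplex n) (hst : ∀ j, ∑ i, w i * C i j = w j) : w = c := by
  have hcpos := c_pos hC hirr hc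
  obtain ⟨⟨hcnn, hcsum⟩, hcst⟩ := hc
  obtain ⟨hwnn, hwsum⟩ := hw
  have : Nonempty (Fin n) := Fin.pos_iff_nonempty.mp hn
  have hne : (Finset.univ.image (fun i => w i / c i)).Nonempty :=
    Finset.Nonempty.image Finset.univ_nonempty _
  set r := (Finset.univ.image (fun i => w i / c i)).min' hne with hr
  obtain ⟨i0, _, hi0⟩ := Finset.mem_image.mp ((Finset.univ.image (fun i => w i / c i)).min'_mem hne)
  have hrle : ∀ i, r ≤ w i / c i := fun i =>
    Finset.min'_le _ _ (Finset.mem_image_of_mem _ (Finset.mem_univ i))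
  set v := fun i => w i - r * c i with hv
  have hvnn : ∀ i, 0 ≤ v i := by
    intro i
    have h1 : r * c i ≤ w i := (le_div_iff₀ (hcpos i)).mp (hrle i)
    simp only [hv]; linarith
  have hvi0 : v i0 = 0 := by
    simp only [hv]
    rw [← hr] at hi0
    have hc0 : c i0 ≠ 0 := (hcpos i0).ne'
    field_simp at hi0
    linarith
  have hvst : ∀ j, ∑ i, v i * C i j = v j := by
    intro j
    simp only [hv]
    have : ∑ i, (w i - r * c i) * C i j = ∑ i, w i * C i j - r * ∑ i, c i * C i j := by
      rw [Finset.mul_sum, ← Finset.sum_sub_distrib]; congr 1; ext i; ring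
    rw [this, hst j, hcst j]
  have hvzero : ∀ i, v i = 0 := by
    intro j
    by_contra hvj
    have hvjpos : 0 < v j := lt_of_le_of_ne (hvnn j) (Ne.symm hvj)
    have hji0 : j ≠ i0 := by rintro rfl; rw [hvi0] at hvjpos; exact lt_irrefl _ hvjpos
    obtain ⟨k, _, hk⟩ := hirr j i0 hji0
    have := stationary_pow hvst k i0
    have hge : v j * (C^k) j i0 ≤ ∑ i, v i * (C^k) i i0 :=
      Finset.single_le_sum (f := fun i => v i * (C^k) i i0)
        (fun i _ => mul_nonneg (hvnn i) (pow_entry_nonneg hC.1 k i i0)) (Finset.mem_univ j)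
    rw [this, hvi0] at hge
    nlinarith [mul_pos hvjpos hk]
  have hwr : ∀ i, w i = r * c i := by
    intro i; have := hvzero i; simp only [hv] at this; linarith
  have : r = 1 := by
    have : ∑ i, w i = ∑ i, r * c i := Finset.sum_congr rfl (fun i _ => hwr i)
    rw [hwsum, ← Finset.mul_sum, hcsum] at this
    linarith
  funext i
  rw [hwr i, this, one_mul]

lemma simplex_le_one {n : ℕ} {x : Fin n → ℝ} (hx : x ∈ simplex n) : ∀ i, x i ≤ 1 := by
  obtain ⟨hnn, hsum⟩ := hx
  intro i
  have := Finset.single_le_sum (f := x) (fun j _ => hnn j) (Finset.mem_univ i)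
  linarith




lemma ratio_lemma {ci ck t s u v a b : ℝ} (hci : 0 < ci) (hik : ci < ck)
    (hs : 0 < s) (hts : s < t)
    (hu : 0 < u) (hu2 : u ≤ 1/2) (hv : 0 < v) (hv2 : v ≤ 1/2)
    (ha : 0 < a) (ha2 : a ≤ 1/2) (hb : 0 < b) (hb2 : b ≤ 1/2)
    (h1 : u * (1-u) = t * ci) (h2 : v * (1-v) = s * ci)
    (h3 : a * (1-a) = t * ck) (h4 : b * (1-b) = s * ck) :
    u * b < v * a := by
  set p := 1 - 2*v with hp
  set q := 1 - 2*u with hq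
  set r := 1 - 2*b with hrr
  set w := 1 - 2*a with hw
  clear_value p q r w
  have hp0 : 0 ≤ p := by rw [hp]; linarith
  have hq0 : 0 ≤ q := by rw [hq]; linarith
  have hr0 : 0 ≤ r := by rw [hrr]; linarith
  have hw0 : 0 ≤ w := by rw [hw]; linarith
  have hp1 : p < 1 := by rw [hp]; linarith
  have hq1 : q < 1 := by rw [hq]; linarith
  have hr1 : r < 1 := by rw [hrr]; linarith
  have hw1 : w < 1 := by rw [hw]; linarith
  have ep : p^2 = 1 - 4*(s*ci) := by rw [hp]; linear_combination (-4:ℝ)*h2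
  have eq' : q^2 = 1 - 4*(t*ci) := by rw [hq]; linear_combination (-4:ℝ)*h1
  have er : r^2 = 1 - 4*(s*ck) := by rw [hrr]; linear_combination (-4:ℝ)*h4
  have ew : w^2 = 1 - 4*(t*ck) := by rw [hw]; linear_combination (-4:ℝ)*h3
  have hdelta : 0 < (t - s) * (ck - ci) := mul_pos (by linarith) (by linarith)
  have hid : (q*r)^2 - (p*w)^2 = 4*((t-s)*(ck-ci)) := by
    linear_combination (r^2)*eq' + (1-4*(t*ci))*er - (w^2)*ep - (1-4*(s*ci))*ew
  have hid2 : q^2 + r^2 - p^2 - w^2 = 4*((t-s)*(ck-ci)) := by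
    linear_combination eq' + er - ep - ew
  -- q*r > p*w
  have key1 : p * w < q * r := by
    have hA2 : (p*w)^2 < (q*r)^2 := by linarith [hid, hdelta]
    exact lt_of_pow_lt_pow_left₀ 2 (mul_nonneg hq0 hr0) hA2
  -- q + r > p + w
  have key2 : p + w < q + r := by
    have hB2 : (p+w)^2 < (q+r)^2 := by
      have e1 : (p+w)^2 = p^2 + w^2 + 2*(p*w) := by ring
      have e2 : (q+r)^2 = q^2 + r^2 + 2*(q*r) := by ring
      rw [e1, e2]; linarith [hid2, hdelta, key1]
    exact lt_of_pow_lt_pow_left₀ 2 (by linarith) hB2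
  have key3 : (1+p)*(1+w) < (1+q)*(1+r) := by nlinarith [key1, key2]
  have key4 : (1-q)*(1-r)*((1+q)*(1+r)) = (1-p)*(1-w)*((1+p)*(1+w)) := by
    linear_combination hid - hid2
  have hqrpos : 0 < (1-q)*(1-r) := mul_pos (by linarith) (by linarith)
  have hpwpos : 0 < (1-p)*(1-w) := mul_pos (by linarith) (by linarith)
  have hqr1pos : (0:ℝ) < (1+q)*(1+r) := mul_pos (by linarith) (by linarith)
  have hfinal : (1-q)*(1-r) < (1-p)*(1-w) := by
    have h5 : (1-q)*(1-r) * ((1+q)*(1+r)) < (1-p)*(1-w) * ((1+q)*(1+r)) := by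
      rw [key4]
      exact mul_lt_mul_of_pos_left key3 hpwpos
    exact lt_of_mul_lt_mul_right h5 (le_of_lt hqr1pos)
  have hu' : 1 - q = 2*u := by rw [hq]; ring
  have hv' : 1 - p = 2*v := by rw [hp]; ring
  have hb' : 1 - r = 2*b := by rw [hrr]; ring
  have ha' : 1 - w = 2*a := by rw [hw]; ring
  rw [hu', hv', hb', ha'] at hfinal
  linarith [hfinal]

lemma sum_erase_eq {n : ℕ} {x : Fin n → ℝ} (hx : x ∈ simplex n) (i : Fin n) :
    ∑ l ∈ Finset.univ.erase i, x l = 1 - x i := by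
  have := Finset.sum_erase_add Finset.univ x (Finset.mem_univ i)
  rw [hx.2] at this
  linarith

lemma pair_le_one {n : ℕ} {x : Fin n → ℝ} (hx : x ∈ simplex n) {i j : Fin n} (hij : j ≠ i) :
    x i + x j ≤ 1 := by
  have h1 : x j ≤ ∑ l ∈ Finset.univ.erase i, x l :=
    Finset.single_le_sum (f := x) (fun l _ => hx.1 l)
      (Finset.mem_erase.mpr ⟨hij, Finset.mem_univ j⟩)
  rw [sum_erase_eq hx i] at h1
  linarith

lemma exists_third {n : ℕ} (hn : 3 ≤ n) (i j : Fin n) : ∃ m : Fin n, m ≠ i ∧ m ≠ j := by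
  by_contra h
  push_neg at h
  have hsub : (Finset.univ : Finset (Fin n)) ⊆ {i, j} := by
    intro m _
    rcases eq_or_ne m i with h1 | h1
    · simp [h1]
    · simp [h m h1]
  have h1 := Finset.card_le_card hsub
  simp [Finset.card_univ] at h1
  have h2 := Finset.card_insert_le i ({j} : Finset (Fin n))
  simp at h2
  omega

lemma interior_lt_one {n : ℕ} (hn : 3 ≤ n) {x : Fin n → ℝ} (hx : x ∈ simplex n)
    (hxpos : ∀ i, 0 < x i) : ∀ i, x i < 1 := by
  intro i
  obtain ⟨m, hmi, _⟩ := exists_third hn i i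
  have := pair_le_one hx hmi
  linarith [hxpos m]

lemma low_low {x y t s ci : ℝ} (hts : s < t) (hci : 0 < ci) (hx2 : x ≤ 1/2) (hy2 : y ≤ 1/2)
    (hx : x*(1-x) = t*ci) (hy : y*(1-y) = s*ci) : y < x := by
  by_contra h
  push_neg at h
  nlinarith [mul_pos (sub_pos.mpr hts) hci,
    mul_nonneg (sub_nonneg.mpr h) (by linarith : (0:ℝ) ≤ 1 - x - y)]

lemma big_max {n : ℕ} (hn : 3 ≤ n) {c x : Fin n → ℝ} {t : ℝ} (ht : 0 < t)
    (hx : x ∈ simplex n) (hxpos : ∀ i, 0 < x i) (hxp : ∀ i, x i * (1-x i) = t * c i)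
    {i : Fin n} (hbig : 1/2 < x i) : ∀ j, j ≠ i → c j < c i := by
  intro j hj
  obtain ⟨m, hmi, hmj⟩ := exists_third hn i j
  have hsub : ({j, m} : Finset (Fin n)) ⊆ Finset.univ.erase i := by
    intro l hl
    simp at hl
    rcases hl with rfl | rfl
    · exact Finset.mem_erase.mpr ⟨hj, Finset.mem_univ _⟩
    · exact Finset.mem_erase.mpr ⟨hmi, Finset.mem_univ _⟩
  have h1 : ∑ l ∈ ({j, m} : Finset (Fin n)), x l ≤ ∑ l ∈ Finset.univ.erase i, x l :=
    Finset.sum_le_sum_of_subset_of_nonneg hsub (fun l _ _ => hx.1 l)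
  rw [Finset.sum_pair (Ne.symm hmj), sum_erase_eq hx i] at h1
  have hjlt : x j < 1 - x i := by linarith [hxpos m]
  have h2 : x j * (1 - x j) < (1 - x i) * (1 - (1 - x i)) := by
    apply quad_mono hjlt
    linarith
  have h3 : x j * (1 - x j) < x i * (1 - x i) := by nlinarith [h2]
  rw [hxp j, hxp i] at h3
  exact (mul_lt_mul_iff_right₀ ht).mp h3

lemma no_two_params {n : ℕ} (hn : 3 ≤ n) {c x y : Fin n → ℝ} {t s : ℝ}
    (hcpos : ∀ i, 0 < c i) (hs : 0 < s) (hts : s < t)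
    (hxs : x ∈ simplex n) (hxpos : ∀ i, 0 < x i) (hxp : ∀ i, x i * (1 - x i) = t * c i)
    (hys : y ∈ simplex n) (hypos : ∀ i, 0 < y i) (hyp : ∀ i, y i * (1 - y i) = s * c i) :
    False := by
  have ht : 0 < t := lt_trans hs hts
  have : Nonempty (Fin n) := ⟨⟨0, by omega⟩⟩
  have hx1 := interior_lt_one hn hxs hxpos
  have hy1 := interior_lt_one hn hys hypos
  have herase_ne : ∀ k : Fin n, (Finset.univ.erase k).Nonempty := by
    intro k
    obtain ⟨m, hmk, _⟩ := exists_third hn k k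
    exact ⟨m, Finset.mem_erase.mpr ⟨hmk, Finset.mem_univ m⟩⟩
  by_cases hbx : ∃ k, 1/2 < x k
  · obtain ⟨k, hk⟩ := hbx
    have hcmax := big_max hn ht hxs hxpos hxp hk
    have hxilow : ∀ i, i ≠ k → x i ≤ 1/2 := by
      intro i hik
      have := pair_le_one hxs hik
      linarith
    by_cases hby : ∃ k', 1/2 < y k'
    · -- both big, same index
      obtain ⟨k', hk'⟩ := hby
      have hcmax' := big_max hn hs hys hypos hyp hk'
      have hkk : k = k' := by
        by_contra hne
        exact lt_asymm (hcmax k' (Ne.symm hne)) (hcmax' k hne)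
      subst hkk
      have hyilow : ∀ i, i ≠ k → y i ≤ 1/2 := by
        intro i hik
        have := pair_le_one hys hik
        linarith
      have hkey : ∀ i ∈ Finset.univ.erase k, x i * (1 - y k) < y i * (1 - x k) := by
        intro i hi
        have hik := (Finset.mem_erase.mp hi).1
        exact ratio_lemma (hcpos i) (hcmax i hik) hs hts (hxpos i) (hxilow i hik)
          (hypos i) (hyilow i hik) (by linarith [hx1 k]) (by linarith)
          (by linarith [hy1 k]) (by linarith)
          (hxp i) (hyp i)
          (by nlinarith [hxp k]) (by nlinarith [hyp k])
      have hsum := Finset.sum_lt_sum_of_nonempty (herase_ne k) hkey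
      rw [← Finset.sum_mul, ← Finset.sum_mul, sum_erase_eq hxs k, sum_erase_eq hys k] at hsum
      nlinarith [hsum]
    · -- x big, y all low
      push_neg at hby
      have hkey : ∀ i ∈ (Finset.univ : Finset (Fin n)), y i < x i := by
        intro i _
        rcases eq_or_ne i k with rfl | hik
        · linarith [hby i]
        · exact low_low hts (hcpos i) (hxilow i hik) (hby i) (hxp i) (hyp i)
      have hsum := Finset.sum_lt_sum_of_nonempty Finset.univ_nonempty hkey
      rw [hxs.2, hys.2] at hsum
      exact lt_irrefl _ hsum
  · push_neg at hbx
    by_cases hby : ∃ k, 1/2 < y k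
    · -- y big at k, x all low
      obtain ⟨k, hk⟩ := hby
      have hcmax := big_max hn hs hys hypos hyp hk
      have hyilow : ∀ i, i ≠ k → y i ≤ 1/2 := by
        intro i hik
        have := pair_le_one hys hik
        linarith
      have hkey : ∀ i ∈ Finset.univ.erase k, x i * (1 - y k) < y i * (x k) := by
        intro i hi
        have hik := (Finset.mem_erase.mp hi).1
        exact ratio_lemma (hcpos i) (hcmax i hik) hs hts (hxpos i) (hbx i)
          (hypos i) (hyilow i hik) (hxpos k) (hbx k)
          (by linarith [hy1 k]) (by linarith)
          (hxp i) (hyp i) (hxp k) (by nlinarith [hyp k])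
      have hsum := Finset.sum_lt_sum_of_nonempty (herase_ne k) hkey
      rw [← Finset.sum_mul, ← Finset.sum_mul, sum_erase_eq hxs k, sum_erase_eq hys k] at hsum
      -- (1 - x k) * (1 - y k) < (1 - y k) * x k  with 1 - y k > 0  gives x k > 1/2
      have hb : 0 < 1 - y k := by linarith [hy1 k]
      nlinarith [hsum, hbx k]
    · -- neither big
      push_neg at hby
      have hkey : ∀ i ∈ (Finset.univ : Finset (Fin n)), y i < x i := by
        intro i _
        exact low_low hts (hcpos i) (hbx i) (hby i) (hxp i) (hyp i)
      have hsum := Finset.sum_lt_sum_of_nonempty Finset.univ_nonempty hkey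
      rw [hxs.2, hys.2] at hsum
      exact lt_irrefl _ hsum

lemma eq_param_case {n : ℕ} (hn : 3 ≤ n) {c x y : Fin n → ℝ} {t : ℝ}
    (hcpos : ∀ i, 0 < c i) (ht : 0 < t)
    (hxs : x ∈ simplex n) (hxpos : ∀ i, 0 < x i) (hxp : ∀ i, x i * (1 - x i) = t * c i)
    (hys : y ∈ simplex n) (hypos : ∀ i, 0 < y i) (hyp : ∀ i, y i * (1 - y i) = t * c i)
    {i0 : Fin n} (hbig : 1/2 < x i0) (hne : x i0 ≠ y i0) : False := by
  have hfac : ∀ i, x i = y i ∨ x i + y i = 1 := by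
    intro i
    have h1 : x i * (1 - x i) = y i * (1 - y i) := by rw [hxp i, hyp i]
    have h2 : (x i - y i) * (1 - x i - y i) = 0 := by nlinarith [h1]
    rcases mul_eq_zero.mp h2 with h3 | h3
    · left; linarith
    · right; linarith
  have hcmax := big_max hn ht hxs hxpos hxp hbig
  have hyi0 : y i0 = 1 - x i0 := by
    rcases hfac i0 with h | h
    · exact absurd h hne
    · linarith
  have hrest : ∀ j, j ≠ i0 → x j = y j := by
    intro j hj
    rcases hfac j with h | h
    · exact h
    · exfalso
      rcases le_or_gt (x j) (1/2 : ℝ) with hxj | hxj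
      · rcases le_or_gt (y j) (1/2 : ℝ) with hyj | hyj
        · -- both ≤ 1/2 and sum 1: both = 1/2, so x j = y j, contradiction with h? no:
          -- x j = y j = 1/2 then they ARE equal; but we are in case x j ≠ y j? we aren't.
          -- h : x j + y j = 1 with both ≤ 1/2 forces both = 1/2 hence equal; then fine, no contradiction.
          -- but we need False. Derive x j = y j = 1/2, then product = 1/4 = t c j and for i0:
          -- x i0 > 1/2 gives c j < c i0 but also y j = 1/2 > ... use big_max on y? y j = 1/2 not > 1/2.
          -- Instead: x j = 1/2 contradicts pair_le_one with x i0 > 1/2: x i0 + x j > 1.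
          have hxj2 : x j = 1/2 := by linarith
          have := pair_le_one hxs (Ne.symm hj)
          linarith
        · -- y j > 1/2 : big_max for y at j gives c i0 < c j, contradicting c j < c i0
          have := big_max hn ht hys hypos hyp hyj i0 (Ne.symm hj)
          exact lt_asymm this (hcmax j hj)
      · -- x j > 1/2 and x i0 > 1/2, j ≠ i0 : contradiction via pair sum
        have := pair_le_one hxs (Ne.symm hj)
        linarith
  have hsx := sum_erase_eq hxs i0
  have hsy := sum_erase_eq hys i0
  have : ∑ l ∈ Finset.univ.erase i0, x l = ∑ l ∈ Finset.univ.erase i0, y l :=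
    Finset.sum_congr rfl (fun l hl => hrest l (Finset.mem_erase.mp hl).1)
  rw [hsx, hsy, hyi0] at this
  linarith

lemma interior_unique {n : ℕ} (hn : 3 ≤ n) {c x y : Fin n → ℝ} {t s : ℝ}
    (hcpos : ∀ i, 0 < c i) (ht : 0 < t) (hs : 0 < s)
    (hxs : x ∈ simplex n) (hxpos : ∀ i, 0 < x i) (hxp : ∀ i, x i * (1 - x i) = t * c i)
    (hys : y ∈ simplex n) (hypos : ∀ i, 0 < y i) (hyp : ∀ i, y i * (1 - y i) = s * c i) :
    x = y := by
  rcases lt_trichotomy t s with hts | hts | hts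
  · exact absurd (no_two_params hn hcpos ht hts hys hypos hyp hxs hxpos hxp) not_false
  · subst hts
    by_contra hne
    have : ∃ i, x i ≠ y i := Function.ne_iff.mp hne
    obtain ⟨i, hi⟩ := this
    have hsum1 : x i + y i = 1 := by
      rcases (show x i = y i ∨ x i + y i = 1 by
        have h1 : x i * (1 - x i) = y i * (1 - y i) := by rw [hxp i, hyp i]
        have h2 : (x i - y i) * (1 - x i - y i) = 0 := by nlinarith [h1]
        rcases mul_eq_zero.mp h2 with h3 | h3
        · left; linarith
        · right; linarith) with h | h
      · exact absurd h hi
      · exact h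
    rcases lt_trichotomy (x i) (1/2 : ℝ) with hx2 | hx2 | hx2
    · -- then y i > 1/2, use eq_param_case with roles swapped
      have hyb : 1/2 < y i := by linarith
      exact absurd (eq_param_case hn hcpos ht hys hypos hyp hxs hxpos hxp hyb (Ne.symm hi)) not_false
    · exfalso; apply hi; linarith
    · exact absurd (eq_param_case hn hcpos ht hxs hxpos hxp hys hypos hyp hx2 hi) not_false
  · exact absurd (no_two_params hn hcpos hs hts hxs hxpos hxp hys hypos hyp) not_false

noncomputable def phi (c t : ℝ) : ℝ := (1 - Real.sqrt (1 - 4*t*c)) / 2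

lemma phi_zero (c : ℝ) : phi c 0 = 0 := by simp [phi]

lemma phi_nonneg {c t : ℝ} (hc : 0 ≤ c) (ht : 0 ≤ t) : 0 ≤ phi c t := by
  have h1 : Real.sqrt (1 - 4*t*c) ≤ 1 := by
    rw [show (1:ℝ) = Real.sqrt 1 from Real.sqrt_one.symm]; apply Real.sqrt_le_sqrt
    rw [Real.sqrt_one]; nlinarith [mul_nonneg ht hc]
  simp only [phi]
  linarith

lemma phi_le_half {c t : ℝ} : phi c t ≤ 1/2 := by
  simp only [phi]
  have := Real.sqrt_nonneg (1 - 4*t*c)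
  linarith

lemma phi_pos {c t : ℝ} (hc : 0 < c) (ht : 0 < t) (h : 4*t*c ≤ 1) : 0 < phi c t := by
  simp only [phi]
  have h1 : Real.sqrt (1 - 4*t*c) < 1 := by
    have : (1 - 4*t*c) < 1 := by nlinarith
    calc Real.sqrt (1 - 4*t*c) < Real.sqrt 1 := Real.sqrt_lt_sqrt (by linarith) this
      _ = 1 := Real.sqrt_one
  linarith

lemma phi_eq {c t : ℝ} (h0 : 0 ≤ 1 - 4*t*c) : phi c t * (1 - phi c t) = t * c := by
  simp only [phi]
  have h1 : Real.sqrt (1 - 4*t*c) ^ 2 = 1 - 4*t*c := Real.sq_sqrt h0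
  nlinarith [h1]

lemma phi_ge {c t : ℝ} (hc : 0 ≤ c) (ht : 0 ≤ t) (h : 4*t*c ≤ 1) : t * c ≤ phi c t := by
  have h2 : Real.sqrt (1 - 4*t*c) ≤ 1 - 2*t*c := by
    rw [show (1 - 2*t*c) = Real.sqrt ((1-2*t*c)^2) by
      rw [Real.sqrt_sq (by nlinarith)]]
    exact Real.sqrt_le_sqrt (by nlinarith [sq_nonneg (t*c)])
  simp only [phi]
  linarith

lemma phi_cont {c ck : ℝ} (hck : ck ≠ 0) :
    Continuous (fun u : ℝ => phi c (u*(1-u)/ck)) := by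
  unfold phi
  fun_prop

lemma exists_interior {n : ℕ} (hn : 3 ≤ n) {c : Fin n → ℝ} (hcsum : ∑ i, c i = 1)
    (hcpos : ∀ i, 0 < c i) (hchalf : ∀ i, c i < 1/2) :
    ∃ x ∈ simplex n, (∀ i, 0 < x i) ∧ ∃ t, 0 < t ∧ ∀ i, x i * (1 - x i) = t * c i := by
  have hne : Nonempty (Fin n) := ⟨⟨0, by omega⟩⟩
  obtain ⟨k, -, hk'⟩ := Finset.exists_max_image Finset.univ c ⟨⟨0, by omega⟩, Finset.mem_univ _⟩
  have hk : ∀ i, c i ≤ c k := fun i => hk' i (Finset.mem_univ i)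
  have hck : 0 < c k := hcpos k
  have hckh : c k < 1/2 := hchalf k
  set H : ℝ → ℝ := fun u => u + ∑ j ∈ Finset.univ.erase k, phi (c j) (u*(1-u)/(c k)) - 1
    with hH
  have hcont : Continuous H := by
    apply Continuous.sub
    apply Continuous.add continuous_id
    apply continuous_finset_sum
    intro j _
    exact phi_cont hck.ne'
    exact continuous_const
  -- bound : for u ∈ [0,1], 4 * (u*(1-u)/(c k)) * c j ≤ 1
  have hbound : ∀ u : ℝ, 0 ≤ u → u ≤ 1 → ∀ j : Fin n, 4 * (u*(1-u)/(c k)) * c j ≤ 1 := by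
    intro u hu0 hu1 j
    have h1 : u * (1-u) ≤ 1/4 := by nlinarith [sq_nonneg (2*u-1)]
    have h2 : (4 : ℝ) * (u*(1-u)/(c k)) * c j = 4 * (u*(1-u)) * (c j / c k) := by
      ring
    rw [h2]
    have h3 : c j / c k ≤ 1 := (div_le_one hck).mpr (hk j)
    have h4 : 0 ≤ c j / c k := div_nonneg (hcpos j).le hck.le
    nlinarith
  have hH0 : H 0 = -1 := by
    simp [hH, phi_zero]
  set ε : ℝ := (1 - 2*(c k))/2 with hε
  have hε0 : 0 < ε := by rw [hε]; linarith
  have hε1 : ε < 1/2 := by rw [hε]; linarith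
  have hHε : 0 < H (1-ε) := by
    rw [hH]
    simp only
    set t1 := (1-ε)*(1-(1-ε))/(c k) with ht1
    have ht1pos : 0 < t1 := by
      rw [ht1]
      apply div_pos _ hck
      nlinarith
    have hlow : ∀ j ∈ Finset.univ.erase k, t1 * c j ≤ phi (c j) t1 := by
      intro j _
      exact phi_ge (hcpos j).le ht1pos.le (hbound (1-ε) (by linarith) (by linarith) j)
    have hsum : ∑ j ∈ Finset.univ.erase k, t1 * c j ≤
        ∑ j ∈ Finset.univ.erase k, phi (c j) t1 := Finset.sum_le_sum hlow
    have hcsum' : ∑ j ∈ Finset.univ.erase k, c j = 1 - c k := by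
      have := Finset.sum_erase_add Finset.univ c (Finset.mem_univ k)
      rw [hcsum] at this
      linarith
    rw [← Finset.mul_sum, hcsum'] at hsum
    have hkey : t1 * (1 - c k) > 1 - (1-ε) := by
      rw [ht1]
      rw [gt_iff_lt, show (1 : ℝ) - (1-ε) = ε by ring]
      rw [div_mul_eq_mul_div, lt_div_iff₀ hck]
      have key2 : (1-ε)*ε*(1-c k) - ε*(c k) = ε^2*(1+c k) := by rw [hε]; ring
      have key3 : 0 < ε^2*(1+c k) := by positivity
      nlinarith [key2, key3]
    linarith
  obtain ⟨u, hu_mem, huH⟩ := intermediate_value_Icc (by linarith : (0:ℝ) ≤ 1-ε)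
    hcont.continuousOn (by rw [hH0]; constructor <;> linarith : (0:ℝ) ∈ Set.Icc (H 0) (H (1-ε)))
  have hu0 : 0 ≤ u := hu_mem.1
  have hu1 : u ≤ 1 - ε := hu_mem.2
  have hupos : 0 < u := by
    rcases eq_or_lt_of_le hu0 with h | h
    · exfalso; rw [← h] at huH; rw [hH0] at huH; norm_num at huH
    · exact h
  have hult : u < 1 := by linarith
  set t := u*(1-u)/(c k) with ht
  have htpos : 0 < t := by
    rw [ht]; apply div_pos _ hck; nlinarith
  set x : Fin n → ℝ := fun i => if i = k then u else phi (c i) t with hx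
  have hxk : x k = u := by simp [hx]
  have hxj : ∀ j, j ≠ k → x j = phi (c j) t := by intro j hj; simp [hx, hj]
  have hxpos : ∀ i, 0 < x i := by
    intro i
    rcases eq_or_ne i k with rfl | hik
    · rw [hxk]; exact hupos
    · rw [hxj i hik]
      exact phi_pos (hcpos i) htpos (hbound u hu0 hult.le i)
  have hxsum : ∑ i, x i = 1 := by
    rw [← Finset.sum_erase_add Finset.univ x (Finset.mem_univ k), hxk]
    have : ∑ j ∈ Finset.univ.erase k, x j = ∑ j ∈ Finset.univ.erase k, phi (c j) t :=
      Finset.sum_congr rfl (fun j hj => hxj j (Finset.mem_erase.mp hj).1)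
    rw [this]
    have := huH
    rw [hH] at this
    simp only at this
    rw [← ht] at this
    linarith
  refine ⟨x, ⟨fun i => (hxpos i).le, hxsum⟩, hxpos, t, htpos, ?_⟩
  intro i
  rcases eq_or_ne i k with rfl | hik
  · rw [hxk, ht]
    field_simp
  · rw [hxj i hik]
    exact phi_eq (by linarith [hbound u hu0 hult.le i])

lemma fp_param {n : ℕ} {C : Matrix (Fin n) (Fin n) ℝ} {c x : Fin n → ℝ} (hC : IsRIM C)
    (hirr : Irred C) (hc : DominantLeftEigenvector C c) (hn : 0 < n)
    (hx : x ∈ simplex n) (hfp : DF C x = x) :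
    ∀ i, x i * (1 - x i) = (∑ j, (x j - x j ^ 2)) * c i := by
  set t := ∑ j, (x j - x j ^ 2) with ht
  have hz : ∀ i, 0 ≤ x i - x i ^ 2 := by
    intro i
    have h1 := hx.1 i
    have h2 := simplex_le_one hx i
    nlinarith
  have hst : ∀ j, ∑ i, (x i - x i ^ 2) * C i j = x j - x j ^ 2 := by
    intro j
    have := congrFun hfp j
    simp only [DF] at this
    have h2 : ∑ i, C i j * (x i - x i ^ 2) = x j - x j ^ 2 := by linarith
    rw [← h2]
    exact Finset.sum_congr rfl (fun i _ => mul_comm _ _)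
  rcases eq_or_lt_of_le (Finset.sum_nonneg (fun j _ => hz j) : (0:ℝ) ≤ t) with h | h
  · -- t = 0 : each term zero
    have hzero : ∀ i, x i - x i ^ 2 = 0 := by
      intro i
      have := (Finset.sum_eq_zero_iff_of_nonneg (fun j _ => hz j)).mp h.symm i (Finset.mem_univ i)
      exact this
    intro i
    have h4 : t = 0 := by rw [ht, ← h]
    rw [h4]
    nlinarith [hzero i]
  · -- t > 0 : normalize
    have hw : (fun i => (x i - x i ^ 2) / t) ∈ simplex n := by
      constructor
      · intro i; exact div_nonneg (hz i) (le_of_lt h)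
      · rw [← Finset.sum_div, ← ht]; exact div_self (ne_of_gt h)
    have hwst : ∀ j, ∑ i, ((x i - x i ^ 2) / t) * C i j = (x j - x j ^ 2) / t := by
      intro j
      rw [← hst j, Finset.sum_div]
      exact Finset.sum_congr rfl (fun i _ => by ring)
    have := stationary_unique hC hirr hc hn hw hwst
    intro i
    have h2 := congrFun this i
    have h3 : x i - x i ^ 2 = t * c i := by
      have htne : t ≠ 0 := ne_of_gt h
      field_simp at h2
      linarith [h2]
    nlinarith [h3]

lemma param_fixed {n : ℕ} {C : Matrix (Fin n) (Fin n) ℝ} {c x : Fin n → ℝ} {t : ℝ}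
    (hcst : ∀ j, ∑ i, c i * C i j = c j) (hxp : ∀ i, x i * (1 - x i) = t * c i) :
    DF C x = x := by
  funext i
  simp only [DF]
  have h1 : ∀ j, x j - x j ^ 2 = t * c j := fun j => by linear_combination hxp j
  have h2 : ∑ j, C j i * (x j - x j ^ 2) = t * c i := by
    calc ∑ j, C j i * (x j - x j ^ 2) = ∑ j, t * (c j * C j i) := by
          apply Finset.sum_congr rfl
          intro j _
          rw [h1 j]; ring
      _ = t * ∑ j, c j * C j i := by rw [← Finset.mul_sum]
      _ = t * c i := by rw [hcst i]
  rw [h2]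
  linear_combination (-1 : ℝ) * hxp i

lemma vertex_fixed {n : ℕ} (C : Matrix (Fin n) (Fin n) ℝ) (i : Fin n) :
    DF C (vertex n i) = vertex n i := by
  funext j
  simp only [DF, vertex]
  have h1 : ∀ l : Fin n, (if l = i then (1:ℝ) else 0) - (if l = i then (1:ℝ) else 0)^2 = 0 := by
    intro l; split <;> norm_num
  have h2 : ∑ l, C l j * ((if l = i then (1:ℝ) else 0) - (if l = i then (1:ℝ) else 0)^2) = 0 := by
    apply Finset.sum_eq_zero
    intro l _
    rw [h1 l, mul_zero]
  rw [h2]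
  split <;> norm_num

theorem stmt4 {n : ℕ} (hn : 3 ≤ n) (C : Matrix (Fin n) (Fin n) ℝ) (hC : IsRIM C)
    (hirr : Irred C) (hnostar : ¬ HasStarTopology C)
    (c : Fin n → ℝ) (hc : DominantLeftEigenvector C c) :
    ∃ xs ∈ simplex n,
      (∀ i, 0 < xs i) ∧ DF C xs = xs ∧
      (∀ y ∈ simplex n, (∀ i, 0 < y i) → DF C y = y → y = xs) ∧
      (∀ x ∈ simplex n, (DF C x = x ↔ (∃ i, x = vertex n i) ∨ x = xs)) ∧
      (∀ i j, (xs j < xs i ↔ c j < c i) ∧ (xs i = xs j ↔ c i = c j)) := by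
  have hn0 : 0 < n := by omega
  have hnefin : Nonempty (Fin n) := ⟨⟨0, by omega⟩⟩
  have hcpos := c_pos hC hirr hc
  have hchalf := c_lt_half hC hirr hnostar hc
  obtain ⟨xs, hxs_mem, hxs_pos, t, ht_pos, hxs_param⟩ :=
    exists_interior hn hc.1.2 hcpos hchalf
  have hfix : DF C xs = xs := param_fixed hc.2 hxs_param
  have uniq : ∀ y ∈ simplex n, (∀ i, 0 < y i) → DF C y = y → y = xs := by
    intro y hy hypos hyfix
    have hyparam := fp_param hC hirr hc hn0 hy hyfix
    have hy1 : ∀ i, y i < 1 := interior_lt_one hn hy hypos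
    have hspos : 0 < ∑ j, (y j - y j ^ 2) :=
      Finset.sum_pos (fun j _ => by nlinarith [hypos j, hy1 j]) Finset.univ_nonempty
    exact interior_unique hn hcpos hspos ht_pos hy hypos hyparam hxs_mem hxs_pos hxs_param
  refine ⟨xs, hxs_mem, hxs_pos, hfix, uniq, ?_, ?_⟩
  · -- characterization of all fixed points
    intro x hx
    constructor
    · intro hfp
      have hparam := fp_param hC hirr hc hn0 hx hfp
      have hle1 := simplex_le_one hx
      have htx0 : 0 ≤ ∑ j, (x j - x j ^ 2) :=
        Finset.sum_nonneg (fun j _ => by nlinarith [hx.1 j, hle1 j])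
      rcases eq_or_lt_of_le htx0 with h0 | h0
      · -- vertex case
        left
        have hzero : ∀ i, x i * (1 - x i) = 0 := by
          intro i
          rw [hparam i, ← h0]
          ring
        have h01 : ∀ i, x i = 0 ∨ x i = 1 := by
          intro i
          rcases mul_eq_zero.mp (hzero i) with h | h
          · left; exact h
          · right; linarith
        have hex : ∃ i, x i = 1 := by
          by_contra h
          push_neg at h
          have : ∀ i, x i = 0 := by
            intro i
            rcases h01 i with h1 | h1
            · exact h1
            · exact absurd h1 (h i)
          have hsum0 : ∑ i, x i = 0 := Finset.sum_eq_zero (fun i _ => this i)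
          rw [hx.2] at hsum0
          norm_num at hsum0
        obtain ⟨i, hi⟩ := hex
        refine ⟨i, funext fun j => ?_⟩
        rcases eq_or_ne j i with rfl | hji
        · simp [vertex, hi]
        · have := pair_le_one hx (Ne.symm hji)
          have hxj0 : x j = 0 := by
            rcases h01 j with h1 | h1
            · exact h1
            · rw [hi] at this; linarith
          simp [vertex, hji, hxj0]
      · -- interior case
        right
        have hxpos : ∀ i, 0 < x i := by
          intro i
          have h1 : 0 < x i * (1 - x i) := by
            rw [hparam i]
            exact mul_pos h0 (hcpos i)
          nlinarith [hx.1 i, hle1 i]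
        exact uniq x hx hxpos hfp
    · rintro (⟨i, rfl⟩ | rfl)
      · exact vertex_fixed C i
      · exact hfix
  · -- ordering
    have hxs1 : ∀ i, xs i < 1 := interior_lt_one hn hxs_mem hxs_pos
    have hstrict : ∀ i j, xs j < xs i → c j < c i := by
      intro i j hji
      rcases le_or_gt (xs i) (1/2 : ℝ) with hhalf | hhalf
      · have h1 : xs j * (1 - xs j) < xs i * (1 - xs i) :=
          quad_mono hji (by linarith)
        rw [hxs_param i, hxs_param j] at h1
        exact (mul_lt_mul_iff_right₀ ht_pos).mp h1
      · exact big_max hn ht_pos hxs_mem hxs_pos hxs_param hhalf j (by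
          intro h; rw [h] at hji; exact lt_irrefl _ hji)
    have heqc : ∀ i j, xs i = xs j → c i = c j := by
      intro i j h
      have h1 : t * c i = t * c j := by
        rw [← hxs_param i, ← hxs_param j, h]
      exact mul_left_cancel₀ ht_pos.ne' h1
    intro i j
    constructor
    · constructor
      · exact hstrict i j
      · intro hcji
        rcases lt_trichotomy (xs j) (xs i) with h | h | h
        · exact h
        · exfalso; have := heqc i j h.symm; linarith
        · exact absurd (hstrict j i h) (lt_asymm hcji)
    · constructor
      · exact heqc i j
      · intro hcij
        rcases lt_trichotomy (xs i) (xs j) with h | h | h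
        · exact absurd (hstrict j i h) (by rw [hcij]; exact lt_irrefl _)
        · exact h
        · exact absurd (hstrict i j h) (by rw [hcij]; exact lt_irrefl _)
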